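/- arXiv:2108.03486 — 2 statements merged into one kernel-verified Lean document; each statement's English description precedes it below -/
import Mathlib

section
/- Under the setting of Proposition 1, with Ω = D(1)D(1)ᵀ, Ωₓₓ = εᵀε positive definite, and Ω₀₀.ₓ the Schur complement of Ωₓₓ in Ω: rank(ξ⊥ᵀ Ċ(1) ε⊥) = rank(Ω₀₀.ₓ), and hence m − rank(Ω) = m₀ − rank(Ω₀₀.ₓ). -/
open Matrix

lemma submodule_finrank_prod {M N : Type*} [AddCommGroup M] [AddCommGroup N]
    [Module ℝ M] [Module ℝ N] [FiniteDimensional ℝ M] [FiniteDimensional ℝ N]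
    (p : Submodule ℝ M) (q : Submodule ℝ N) :
    Module.finrank ℝ (p.prod q) = Module.finrank ℝ p + Module.finrank ℝ q := by
  rw [← Module.finrank_prod]
  refine LinearEquiv.finrank_eq ?_
  exact
    { toFun := fun x => (⟨x.1.1, x.2.1⟩, ⟨x.1.2, x.2.2⟩)
      invFun := fun x => ⟨(x.1.1, x.2.1), ⟨x.1.2, x.2.2⟩⟩
      map_add' := fun a b => rfl
      map_smul' := fun c a => rfl
      left_inv := fun a => rfl
      right_inv := fun a => rfl }

lemma range_prodMap' {M N M' N' : Type*} [AddCommGroup M] [AddCommGroup N] [AddCommGroup M']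
    [AddCommGroup N'] [Module ℝ M] [Module ℝ N] [Module ℝ M'] [Module ℝ N']
    (f : M →ₗ[ℝ] M') (g : N →ₗ[ℝ] N') :
    LinearMap.range (f.prodMap g) = (LinearMap.range f).prod (LinearMap.range g) := by
  ext ⟨a, b⟩
  simp only [LinearMap.mem_range, Submodule.mem_prod, LinearMap.prodMap_apply, Prod.mk.injEq]
  constructor
  · rintro ⟨⟨x, y⟩, hx, hy⟩
    exact ⟨⟨x, hx⟩, ⟨y, hy⟩⟩
  · rintro ⟨⟨x, hx⟩, ⟨y, hy⟩⟩
    exact ⟨(x, y), hx, hy⟩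

lemma rank_fromBlocks_diag {m n : Type*} [Fintype m] [Fintype n] [DecidableEq m] [DecidableEq n]
    (A : Matrix m m ℝ) (D : Matrix n n ℝ) :
    (Matrix.fromBlocks A 0 0 D).rank = A.rank + D.rank := by
  classical
  set e := LinearEquiv.sumArrowLequivProdArrow m n ℝ ℝ with he
  have key : (Matrix.fromBlocks A 0 0 D).mulVecLin =
      e.symm.toLinearMap ∘ₗ (A.mulVecLin.prodMap D.mulVecLin) ∘ₗ e.toLinearMap := by
    refine LinearMap.ext fun v => ?_
    have hv : v = Sum.elim (v ∘ Sum.inl) (v ∘ Sum.inr) := (Sum.elim_comp_inl_inr v).symm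
    simp only [mulVecLin_apply, LinearMap.comp_apply, LinearEquiv.coe_coe,
      LinearMap.prodMap_apply]
    conv_lhs => rw [hv]
    rw [fromBlocks_mulVec]
    simp only [zero_mulVec, add_zero, zero_add]
    funext i
    cases i <;> simp [e, LinearEquiv.sumArrowLequivProdArrow, Equiv.sumArrowEquivProdArrow]
  rw [Matrix.rank, key]
  rw [LinearMap.range_comp, LinearMap.range_comp_of_range_eq_top _
    (LinearMap.range_eq_top.2 e.surjective)]
  rw [LinearEquiv.finrank_map_eq, range_prodMap', submodule_finrank_prod]
  rfl

lemma rank_neg' {m n : Type*} [Fintype n] (M : Matrix m n ℝ) : (-M).rank = M.rank := by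
  have h : (-M).mulVecLin = -(M.mulVecLin) := by
    ext v
    simp [neg_mulVec]
  rw [Matrix.rank, Matrix.rank, h, LinearMap.range_neg]

/-- Under the setting of Proposition 1: with `Ω = D(1)D(1)ᵀ`,
`Ωₓₓ = εᵀε` positive definite (`εᵀ = [D_{x0}(1), D_{xx}(1)]` the lower rows of
`D(1)`, `ε⊥` spanning its kernel), and `Ω₀₀.ₓ` the Schur complement of the
lower-right block of `Ω`, we have `rank(ξ⊥ᵀ Ċ(1) ε⊥) = rank(Ω₀₀.ₓ)` and hence
`m − rank(Ω) = m₀ − rank(Ω₀₀.ₓ)`. -/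
theorem multicointegration_rank_eq {m₀ mₓ : ℕ}
    (A : Matrix (Fin m₀) (Fin mₓ) ℝ)
    (D₀₀ : Matrix (Fin m₀) (Fin m₀) ℝ) (D₀ₓ : Matrix (Fin m₀) (Fin mₓ) ℝ)
    (Dx0 : Matrix (Fin mₓ) (Fin m₀) ℝ) (Dxx : Matrix (Fin mₓ) (Fin mₓ) ℝ)
    (Ddot : Matrix (Fin m₀ ⊕ Fin mₓ) (Fin m₀ ⊕ Fin mₓ) ℝ)
    (εperp : Matrix (Fin m₀ ⊕ Fin mₓ) (Fin m₀) ℝ)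
    (D1 : Matrix (Fin m₀ ⊕ Fin mₓ) (Fin m₀ ⊕ Fin mₓ) ℝ)
    (hD1 : D1 = Matrix.fromBlocks D₀₀ D₀ₓ Dx0 Dxx)
    (Ω : Matrix (Fin m₀ ⊕ Fin mₓ) (Fin m₀ ⊕ Fin mₓ) ℝ)
    (hΩ : Ω = D1 * D1ᵀ)
    (hxx : ((Matrix.fromCols Dx0 Dxx) * (Matrix.fromCols Dx0 Dxx)ᵀ).PosDef)
    (hεperp : εperp.rank = m₀)
    (hker : (Matrix.fromCols Dx0 Dxx) * εperp = 0)
    (Ω₀₀ₓ : Matrix (Fin m₀) (Fin m₀) ℝ)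
    (hschur : Ω₀₀ₓ = Ω.toBlocks₁₁ - Ω.toBlocks₁₂ * (Ω.toBlocks₂₂)⁻¹ * Ω.toBlocks₂₁) :
    ((Matrix.fromCols (1 : Matrix (Fin m₀) (Fin m₀) ℝ) (-A)) *
          ((Matrix.fromBlocks (-1) 0 0 0) * D1
            + (Matrix.fromBlocks 0 A 0 1) * Ddot) * εperp).rank = Ω₀₀ₓ.rank ∧
      (m₀ + mₓ) - Ω.rank = m₀ - Ω₀₀ₓ.rank := by
  classical
  set E := Matrix.fromCols Dx0 Dxx with hE
  set F := Matrix.fromCols D₀₀ D₀ₓ with hF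
  have hD1' : D1 = fromRows F E := by
    rw [hD1, ← fromRows_fromCols_eq_fromBlocks]
  have hdet : IsUnit (E * Eᵀ).det := hxx.det_pos.ne'.isUnit
  haveI : Invertible (E * Eᵀ) := (E * Eᵀ).invertibleOfIsUnitDet hdet
  -- block form of Ω
  have hΩb : Ω = fromBlocks (F * Fᵀ) (F * Eᵀ) (E * Fᵀ) (E * Eᵀ) := by
    rw [hΩ, hD1', transpose_fromRows, fromRows_mul_fromCols]
  have hS : Ω₀₀ₓ = F * Fᵀ - F * Eᵀ * (E * Eᵀ)⁻¹ * (E * Fᵀ) := by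
    rw [hschur, hΩb]
    simp [Matrix.toBlocks_fromBlocks₁₁, Matrix.toBlocks_fromBlocks₁₂,
      Matrix.toBlocks_fromBlocks₂₁, Matrix.toBlocks_fromBlocks₂₂]
  set P : Matrix (Fin m₀ ⊕ Fin mₓ) (Fin m₀ ⊕ Fin mₓ) ℝ := 1 - Eᵀ * (E * Eᵀ)⁻¹ * E with hP
  have hEP : E * P = 0 := by
    rw [hP, Matrix.mul_sub, Matrix.mul_one,
      show E * (Eᵀ * (E * Eᵀ)⁻¹ * E) = (E * Eᵀ) * (E * Eᵀ)⁻¹ * E by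
        rw [← Matrix.mul_assoc, ← Matrix.mul_assoc],
      Matrix.mul_nonsing_inv _ hdet, Matrix.one_mul, sub_self]
  have hPsymm : Pᵀ = P := by
    rw [hP, transpose_sub, transpose_one, transpose_mul, transpose_mul, transpose_transpose,
      Matrix.transpose_nonsing_inv, transpose_mul, transpose_transpose, Matrix.mul_assoc]
  have hPP : P * P = P := by
    nth_rewrite 1 [hP]
    rw [Matrix.sub_mul, Matrix.one_mul,
      show Eᵀ * (E * Eᵀ)⁻¹ * E * P = Eᵀ * (E * Eᵀ)⁻¹ * (E * P) by rw [Matrix.mul_assoc],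
      hEP, Matrix.mul_zero, sub_zero]
  have hSP : Ω₀₀ₓ = (F * P) * (F * P)ᵀ := by
    rw [hS, transpose_mul, hPsymm,
      show F * P * (P * Fᵀ) = F * (P * P) * Fᵀ by
        rw [Matrix.mul_assoc, ← Matrix.mul_assoc P P Fᵀ, ← Matrix.mul_assoc], hPP, hP,
      Matrix.mul_sub, Matrix.mul_one, Matrix.sub_mul]
    simp [Matrix.mul_assoc]
  have hr1 : Ω₀₀ₓ.rank = (F * P).rank := by
    rw [hSP, rank_self_mul_transpose]
  -- ranges
  have hrangeP : LinearMap.range P.mulVecLin = LinearMap.ker E.mulVecLin := by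
    apply le_antisymm
    · rintro x ⟨v, rfl⟩
      simp [LinearMap.mem_ker, mulVec_mulVec, hEP]
    · intro v hv
      refine ⟨v, ?_⟩
      have hv' : E *ᵥ v = 0 := hv
      simp only [mulVecLin_apply, hP, sub_mulVec, one_mulVec]
      rw [show (Eᵀ * (E * Eᵀ)⁻¹ * E) *ᵥ v = (Eᵀ * (E * Eᵀ)⁻¹) *ᵥ (E *ᵥ v) by
        rw [mulVec_mulVec], hv', mulVec_zero, sub_zero]
  have hrankE : E.rank = mₓ := by
    have h1 := rank_self_mul_transpose E
    rw [← h1, Matrix.rank_of_isUnit _ ((Matrix.isUnit_iff_isUnit_det _).2 hdet),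
      Fintype.card_fin]
  have hkerE : Module.finrank ℝ (LinearMap.ker E.mulVecLin) = m₀ := by
    have h := LinearMap.finrank_range_add_finrank_ker E.mulVecLin
    rw [Module.finrank_pi] at h
    have h2 : Module.finrank ℝ (LinearMap.range E.mulVecLin) = mₓ := hrankE
    simp only [Fintype.card_sum, Fintype.card_fin] at h
    omega
  have hrangeε : LinearMap.range εperp.mulVecLin = LinearMap.ker E.mulVecLin := by
    apply Submodule.eq_of_le_of_finrank_eq
    · rintro x ⟨v, rfl⟩
      simp [LinearMap.mem_ker, mulVec_mulVec, hker]
    · rw [hkerE]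
      exact hεperp
  have hr2 : (F * P).rank = (F * εperp).rank := by
    rw [Matrix.rank, Matrix.rank, Matrix.mulVecLin_mul, Matrix.mulVecLin_mul,
      LinearMap.range_comp, LinearMap.range_comp, hrangeP, hrangeε]
  -- the target matrix
  have h1 : Matrix.fromCols (1 : Matrix (Fin m₀) (Fin m₀) ℝ) (-A) *
      Matrix.fromBlocks (-1 : Matrix (Fin m₀) (Fin m₀) ℝ) (0 : Matrix (Fin m₀) (Fin mₓ) ℝ)
        (0 : Matrix (Fin mₓ) (Fin m₀) ℝ) (0 : Matrix (Fin mₓ) (Fin mₓ) ℝ)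
      = Matrix.fromCols (-1 : Matrix (Fin m₀) (Fin m₀) ℝ) (0 : Matrix (Fin m₀) (Fin mₓ) ℝ) := by
    rw [fromCols_mul_fromBlocks]
    congr 1 <;> simp
  have h2 : Matrix.fromCols (1 : Matrix (Fin m₀) (Fin m₀) ℝ) (-A) *
      Matrix.fromBlocks (0 : Matrix (Fin m₀) (Fin m₀) ℝ) A (0 : Matrix (Fin mₓ) (Fin m₀) ℝ)
        (1 : Matrix (Fin mₓ) (Fin mₓ) ℝ) = 0 := by
    rw [fromCols_mul_fromBlocks, ← fromCols_zero]
    congr 1 <;> simp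
  have h3 : Matrix.fromCols (-1 : Matrix (Fin m₀) (Fin m₀) ℝ) (0 : Matrix (Fin m₀) (Fin mₓ) ℝ) *
      D1 = -F := by
    rw [hD1', fromCols_mul_fromRows]
    simp [Matrix.neg_mul]
  have htarget : ((Matrix.fromCols (1 : Matrix (Fin m₀) (Fin m₀) ℝ) (-A)) *
          ((Matrix.fromBlocks (-1) 0 0 0) * D1
            + (Matrix.fromBlocks 0 A 0 1) * Ddot) * εperp) = -(F * εperp) := by
    rw [Matrix.mul_add, ← Matrix.mul_assoc, ← Matrix.mul_assoc, h1, h2, h3,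
      Matrix.zero_mul, add_zero, Matrix.neg_mul]
  refine ⟨?_, ?_⟩
  · rw [htarget, rank_neg', ← hr2, ← hr1]
  · -- rank Ω = Ω₀₀ₓ.rank + mₓ
    have hmid : Ω₀₀ₓ = F * Fᵀ - F * Eᵀ * ⅟(E * Eᵀ) * (E * Fᵀ) := by
      rw [Matrix.invOf_eq_nonsing_inv]
      exact hS
    have hL : IsUnit (Matrix.fromBlocks (1 : Matrix (Fin m₀) (Fin m₀) ℝ)
        (F * Eᵀ * ⅟(E * Eᵀ)) 0 1).det := by
      rw [Matrix.det_fromBlocks_zero₂₁]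
      simp
    have hU : IsUnit (Matrix.fromBlocks (1 : Matrix (Fin m₀) (Fin m₀) ℝ) 0
        (⅟(E * Eᵀ) * (E * Fᵀ)) 1).det := by
      rw [Matrix.det_fromBlocks_zero₁₂]
      simp
    have hΩrank : Ω.rank = Ω₀₀ₓ.rank + mₓ := by
      rw [hΩb, fromBlocks_eq_of_invertible₂₂ (F * Fᵀ) (F * Eᵀ) (E * Fᵀ) (E * Eᵀ),
        rank_mul_eq_left_of_isUnit_det _ _ hU,
        rank_mul_eq_right_of_isUnit_det _ _ hL,
        rank_fromBlocks_diag, ← hmid,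
        Matrix.rank_of_isUnit _ ((Matrix.isUnit_iff_isUnit_det _).2 hdet),
        Fintype.card_fin]
    have hbound : Ω₀₀ₓ.rank ≤ m₀ := by
      have := Matrix.rank_le_card_width Ω₀₀ₓ
      simpa using this
    omega
end

section
/- Exact FM-OLS error decomposition: with ŷ_t⁺ = y_t − Ω̂₀ₓΩ̂ₓₓ⁻¹Δx_t, y_t = A x_t + u_{0t}, u_{0.x,t} = u_{0t} − Ω₀ₓΩₓₓ⁻¹u_{xt}, Δx_t = u_{xt}, and Â⁺ = (Ŷ⁺ᵀX − TΔ̂₀ₓ⁺)(XᵀX)⁻¹, one has T(Â⁺ − A) = (T⁻¹U₀.ₓᵀX − Δ̃₀ₓ⁺)(T⁻²XᵀX)⁻¹ − Ω̃₀ₓ⁺ Ω̂ₓₓ⁻¹ (T⁻¹UₓᵀX − Δ̂ₓₓ)(T⁻²XᵀX)⁻¹. -/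
open Matrix

/-- Exact finite-sample FM-OLS error decomposition:
`T(Â⁺ − A) = (T⁻¹U₀.ₓᵀX − Δ̃₀ₓ⁺)(T⁻²XᵀX)⁻¹ − Ω̃₀ₓ⁺Ω̂ₓₓ⁻¹(T⁻¹UₓᵀX − Δ̂ₓₓ)(T⁻²XᵀX)⁻¹`. -/
theorem fmols_error_decomposition {T m₀ mₓ : ℕ} (hT : 0 < T)
    (X Ux : Matrix (Fin T) (Fin mₓ) ℝ)
    (Y U₀ U0x Yplus : Matrix (Fin T) (Fin m₀) ℝ)
    (A Aplus : Matrix (Fin m₀) (Fin mₓ) ℝ)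
    (Ω₀ₓ Ωhat₀ₓ Δhat₀ₓ Δtilde Ωtilde : Matrix (Fin m₀) (Fin mₓ) ℝ)
    (Ωₓₓ Ωhatₓₓ Δhatₓₓ : Matrix (Fin mₓ) (Fin mₓ) ℝ)
    (hX : IsUnit (Xᵀ * X).det) (hΩhatₓₓ : IsUnit Ωhatₓₓ.det)
    (hY : Y = X * Aᵀ + U₀)
    (hU0x : U0x = U₀ - Ux * (Ω₀ₓ * Ωₓₓ⁻¹)ᵀ)
    (hYplus : Yplus = Y - Ux * (Ωhat₀ₓ * Ωhatₓₓ⁻¹)ᵀ)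
    (hΔtilde : Δtilde = Δhat₀ₓ - Ω₀ₓ * Ωₓₓ⁻¹ * Δhatₓₓ)
    (hΩtilde : Ωtilde = Ωhat₀ₓ - Ω₀ₓ * Ωₓₓ⁻¹ * Ωhatₓₓ)
    (hAplus : Aplus
      = (Yplusᵀ * X - (T : ℝ) • (Δtilde - Ωtilde * Ωhatₓₓ⁻¹ * Δhatₓₓ)) * (Xᵀ * X)⁻¹) :
    (T : ℝ) • (Aplus - A)
      = ((T : ℝ)⁻¹ • (U0xᵀ * X) - Δtilde) * (((T : ℝ) ^ 2)⁻¹ • (Xᵀ * X))⁻¹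
        - Ωtilde * Ωhatₓₓ⁻¹ * ((T : ℝ)⁻¹ • (Uxᵀ * X) - Δhatₓₓ)
            * (((T : ℝ) ^ 2)⁻¹ • (Xᵀ * X))⁻¹ := by
  have hT0 : (T : ℝ) ≠ 0 := Nat.cast_ne_zero.mpr hT.ne'
  have h2 : ((T : ℝ) ^ 2)⁻¹ ≠ 0 := by positivity
  have hinv : (((T : ℝ) ^ 2)⁻¹ • (Xᵀ * X))⁻¹ = ((T : ℝ) ^ 2) • (Xᵀ * X)⁻¹ := by
    haveI : Invertible (((T : ℝ) ^ 2)⁻¹) := invertibleOfNonzero h2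
    rw [Matrix.inv_smul (A := Xᵀ * X) (((T : ℝ) ^ 2)⁻¹) hX]
    simp
  have hMM : ∀ B : Matrix (Fin m₀) (Fin mₓ) ℝ, B * Xᵀ * X * (Xᵀ * X)⁻¹ = B := by
    intro B
    rw [Matrix.mul_assoc B Xᵀ X, Matrix.mul_assoc B, Matrix.mul_nonsing_inv _ hX,
      Matrix.mul_one]
  have hΩ : ∀ C : Matrix (Fin m₀) (Fin mₓ) ℝ, C * Ωhatₓₓ * Ωhatₓₓ⁻¹ = C := by
    intro C
    rw [Matrix.mul_assoc, Matrix.mul_nonsing_inv _ hΩhatₓₓ, Matrix.mul_one]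
  subst hY hU0x hYplus hΔtilde hΩtilde hAplus
  rw [hinv]
  simp only [Matrix.transpose_add, Matrix.transpose_sub, Matrix.transpose_mul,
    Matrix.transpose_transpose, Matrix.sub_mul, Matrix.add_mul, Matrix.mul_sub,
    Matrix.mul_add, Matrix.smul_mul, Matrix.mul_smul, smul_sub, smul_add, smul_smul,
    ← Matrix.mul_assoc, hMM, hΩ]
  rw [show (T:ℝ)^2 * (T:ℝ)⁻¹ = (T:ℝ) by field_simp]
  module
end
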